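/- Let $A$ be a noetherian commutative ring, $f \in A[u]$ monic of degree $n$, and $B = \mathrm{Split}_A(f)$. For any prime $\mathfrak{p}$ of $A$, the fiber ring $B \otimes_A \kappa(\mathfrak{p})$ is a finite-dimensional local complete intersection $\kappa(\mathfrak{p})$-algebra; consequently, the map $A \to B$ is syntomic (flat, of finite presentation, with local complete intersection fibers). -/

import Mathlib

/-- The ideal of relations defining the splitting ring of a monic polynomial
`f = u^n + a_1 u^(n-1) + ... + a_n`: it is generated by the elements
`a_i - (-1)^i e_i(ξ_1, ..., ξ_n)` for `1 ≤ i ≤ n`, where `a_i = f.coeff (n - i)`. -/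
noncomputable def splittingIdeal (A : Type) [CommRing A] (n : ℕ) (f : Polynomial A) :
    Ideal (MvPolynomial (Fin n) A) :=
  Ideal.span (Set.range fun i : Fin n =>
    MvPolynomial.C (f.coeff (n - ((i : ℕ) + 1))) -
      (-1 : MvPolynomial (Fin n) A) ^ ((i : ℕ) + 1) *
        MvPolynomial.esymm (Fin n) A ((i : ℕ) + 1))

/-- The splitting ring `Split_A(f) = A[ξ_1, ..., ξ_n]/I`. -/
noncomputable abbrev SplitRing (A : Type) [CommRing A] (n : ℕ) (f : Polynomial A) : Type :=
  MvPolynomial (Fin n) A ⧸ splittingIdeal A n f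

open Polynomial MvPolynomial

set_option maxHeartbeats 1000000
set_option synthInstance.maxHeartbeats 200000

section Aux

variable {A : Type} [CommRing A]

lemma prod_coeff {S : Type} [CommRing S] [Algebra A S] {n k : ℕ} (v : Fin n → S)
    (hkn : k ≤ n) :
    (∏ i, (Polynomial.X - Polynomial.C (v i))).coeff (n - k)
      = (-1 : S) ^ k * MvPolynomial.aeval v (MvPolynomial.esymm (Fin n) A k) := by
  have hcard : Multiset.card (Finset.univ.val.map v) = n := by simp
  have h1 : (∏ i : Fin n, (Polynomial.X - Polynomial.C (v i)))
      = ((Finset.univ.val.map v).map (fun t => Polynomial.X - Polynomial.C t)).prod := by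
    rw [Multiset.map_map]; rfl
  rw [h1, Multiset.prod_X_sub_C_coeff _ (by rw [hcard]; exact Nat.sub_le _ _), hcard,
    Nat.sub_sub_self hkn, aeval_esymm_eq_multiset_esymm]

lemma factor_iff {S : Type} [CommRing S] [Algebra A S] {n : ℕ} {f : Polynomial A}
    (hm : f.Monic) (hd : f.natDegree = n) (v : Fin n → S) :
    f.map (algebraMap A S) = ∏ i, (Polynomial.X - Polynomial.C (v i)) ↔
      ∀ i : Fin n, algebraMap A S (f.coeff (n - ((i : ℕ) + 1))) =
        (-1 : S) ^ ((i : ℕ) + 1) * MvPolynomial.aeval v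
          (MvPolynomial.esymm (Fin n) A ((i : ℕ) + 1)) := by
  rcases subsingleton_or_nontrivial S with hS | hS
  · constructor <;> intros <;> exact Subsingleton.elim _ _
  have hQm : (∏ i : Fin n, (Polynomial.X - Polynomial.C (v i))).Monic :=
    monic_prod_of_monic _ _ fun i _ => monic_X_sub_C _
  have hQd : (∏ i : Fin n, (Polynomial.X - Polynomial.C (v i))).natDegree = n := by
    rw [natDegree_prod_of_monic _ _ fun i _ => monic_X_sub_C _]
    simp
  have hfd : (f.map (algebraMap A S)).natDegree = n := by
    rw [hm.natDegree_map, hd]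
  constructor
  · intro h i
    rw [← prod_coeff v (Nat.succ_le_of_lt i.isLt), ← h, Polynomial.coeff_map]
  · intro h
    apply Polynomial.ext
    intro j
    rcases lt_trichotomy j n with hj | hj | hj
    · set i : Fin n := ⟨n - 1 - j, by omega⟩ with hi
      have hji : j = n - ((i : ℕ) + 1) := by simp only [hi]; omega
      rw [Polynomial.coeff_map, hji, h i, ← prod_coeff v (Nat.succ_le_of_lt i.isLt)]
    · have e1 : (f.map (algebraMap A S)).coeff n = 1 := by
        have := (hm.map (algebraMap A S)).coeff_natDegree; rwa [hfd] at this
      have e2 : (∏ i : Fin n, (Polynomial.X - Polynomial.C (v i))).coeff n = 1 := by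
        have := hQm.coeff_natDegree; rwa [hQd] at this
      rw [hj, e1, e2]
    · rw [Polynomial.coeff_eq_zero_of_natDegree_lt (by rw [hfd]; exact hj),
        Polynomial.coeff_eq_zero_of_natDegree_lt (by rw [hQd]; exact hj)]

lemma splitRing_factor {n : ℕ} {f : Polynomial A} (hm : f.Monic) (hd : f.natDegree = n) :
    f.map (algebraMap A (SplitRing A n f)) =
      ∏ i : Fin n, (Polynomial.X -
        Polynomial.C (Ideal.Quotient.mk (splittingIdeal A n f) (MvPolynomial.X i))) := by
  rw [factor_iff hm hd]
  intro i
  have hmem : (MvPolynomial.C (f.coeff (n - ((i : ℕ) + 1))) -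
      (-1 : MvPolynomial (Fin n) A) ^ ((i : ℕ) + 1) *
        MvPolynomial.esymm (Fin n) A ((i : ℕ) + 1)) ∈ splittingIdeal A n f :=
    Ideal.subset_span ⟨i, rfl⟩
  have h0 := (Ideal.Quotient.eq_zero_iff_mem (I := splittingIdeal A n f)).mpr hmem
  rw [map_sub, sub_eq_zero, map_mul, map_pow, map_neg, map_one] at h0
  have hC : (Ideal.Quotient.mk (splittingIdeal A n f))
      (MvPolynomial.C (f.coeff (n - ((i : ℕ) + 1)))) =
      algebraMap A (SplitRing A n f) (f.coeff (n - ((i : ℕ) + 1))) := by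
    rw [← MvPolynomial.algebraMap_eq, ← Ideal.Quotient.mkₐ_eq_mk (R₁ := A)]
    exact AlgHom.commutes _ _
  have hE : (Ideal.Quotient.mk (splittingIdeal A n f))
      (MvPolynomial.esymm (Fin n) A ((i : ℕ) + 1)) =
      MvPolynomial.aeval (fun j : Fin n => Ideal.Quotient.mk (splittingIdeal A n f)
        (MvPolynomial.X j)) (MvPolynomial.esymm (Fin n) A ((i : ℕ) + 1)) := by
    conv_lhs => rw [← Ideal.Quotient.mkₐ_eq_mk (R₁ := A),
      MvPolynomial.aeval_unique (Ideal.Quotient.mkₐ A (splittingIdeal A n f))]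
    congr 1
  rw [← hC, h0, hE]

noncomputable def splitLift {S : Type} [CommRing S] [Algebra A S] {n : ℕ} {f : Polynomial A}
    (hm : f.Monic) (hd : f.natDegree = n) (v : Fin n → S)
    (hv : f.map (algebraMap A S) = ∏ i, (Polynomial.X - Polynomial.C (v i))) :
    SplitRing A n f →ₐ[A] S :=
  Ideal.Quotient.liftₐ _ (MvPolynomial.aeval v) (by
    have h := (factor_iff hm hd v).mp hv
    intro a ha
    have hle : splittingIdeal A n f ≤
        RingHom.ker (MvPolynomial.aeval v : MvPolynomial (Fin n) A →ₐ[A] S).toRingHom := by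
      rw [splittingIdeal, Ideal.span_le]
      rintro x ⟨i, rfl⟩
      simp only [SetLike.mem_coe, RingHom.mem_ker, AlgHom.toRingHom_eq_coe, RingHom.coe_coe,
        map_sub, map_mul, map_pow, map_neg, map_one, MvPolynomial.aeval_C]
      rw [h i]
      ring
    exact hle ha)

@[simp] lemma splitLift_mk_X {S : Type} [CommRing S] [Algebra A S] {n : ℕ} {f : Polynomial A}
    (hm : f.Monic) (hd : f.natDegree = n) (v : Fin n → S)
    (hv : f.map (algebraMap A S) = ∏ i, (Polynomial.X - Polynomial.C (v i))) (i : Fin n) :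
    splitLift hm hd v hv (Ideal.Quotient.mk (splittingIdeal A n f) (MvPolynomial.X i)) = v i := by
  exact MvPolynomial.aeval_X v i

end Aux

lemma splitRing_free_finite : ∀ (n : ℕ) (A : Type) [CommRing A] (f : Polynomial A),
    f.Monic → f.natDegree = n →
    Module.Free A (SplitRing A n f) ∧ Module.Finite A (SplitRing A n f) := by
  intro n
  induction n with
  | zero =>
    intro A _ f hm hd
    have hI : splittingIdeal A 0 f = ⊥ := by
      simp [splittingIdeal, Set.range_eq_empty]
    have hinj : Function.Injective (Ideal.Quotient.mkₐ A (splittingIdeal A 0 f)) := by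
      rw [Ideal.Quotient.mkₐ_eq_mk]
      refine (RingHom.injective_iff_ker_eq_bot _).mpr ?_
      rw [Ideal.mk_ker, hI]
    let e : MvPolynomial (Fin 0) A ≃ₐ[A] SplitRing A 0 f :=
      AlgEquiv.ofBijective (Ideal.Quotient.mkₐ A (splittingIdeal A 0 f))
        ⟨hinj, Ideal.Quotient.mkₐ_surjective A _⟩
    let E : A ≃ₐ[A] SplitRing A 0 f := (MvPolynomial.isEmptyAlgEquiv A (Fin 0)).symm.trans e
    exact ⟨Module.Free.of_equiv E.toLinearEquiv, Module.Finite.equiv E.toLinearEquiv⟩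
  | succ n IH =>
    intro A _ f hm hd
    rcases subsingleton_or_nontrivial A with hA | hA
    · haveI : Subsingleton (SplitRing A (n + 1) f) := Module.subsingleton A _
      refine ⟨Module.Free.of_subsingleton' A _, ?_⟩
      constructor
      rw [Subsingleton.elim (⊤ : Submodule A (SplitRing A (n + 1) f)) ⊥]
      exact Submodule.fg_bot
    set A₁ := AdjoinRoot f with hA₁
    haveI : Nontrivial A₁ := by
      have hfu : ¬ IsUnit f := fun h => by
        have h1 := hm.eq_one_of_isUnit h
        rw [h1] at hd
        simp at hd
      exact Ideal.Quotient.nontrivial_iff.mpr (fun htop =>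
        hfu (Ideal.span_singleton_eq_top.mp htop))
    set r : A₁ := AdjoinRoot.root f with hr
    have hroot : (f.map (algebraMap A A₁)).IsRoot r := by
      rw [AdjoinRoot.algebraMap_eq]; exact AdjoinRoot.isRoot_root f
    set g : Polynomial A₁ := f.map (algebraMap A A₁) /ₘ (Polynomial.X - Polynomial.C r) with hg
    have hfg : (Polynomial.X - Polynomial.C r) * g = f.map (algebraMap A A₁) :=
      Polynomial.mul_divByMonic_eq_iff_isRoot.mpr hroot
    have hgm : g.Monic :=
      Polynomial.Monic.of_mul_monic_left (Polynomial.monic_X_sub_C r)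
        (by rw [hfg]; exact hm.map _)
    have hgd : g.natDegree = n := by
      have h1 := (Polynomial.monic_X_sub_C r).natDegree_mul hgm
      rw [hfg, hm.natDegree_map, hd, Polynomial.natDegree_X_sub_C] at h1
      omega
    -- B and its generators
    set B := SplitRing A (n + 1) f with hB
    set ξ : Fin (n + 1) → B := fun i => Ideal.Quotient.mk _ (MvPolynomial.X i) with hξ
    have hfB : f.map (algebraMap A B) =
        ∏ i : Fin (n + 1), (Polynomial.X - Polynomial.C (ξ i)) := splitRing_factor hm hd
    -- the root maps to ξ last
    have h0 : Polynomial.aeval (ξ (Fin.last n)) f = 0 := by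
      rw [Polynomial.aeval_def, ← Polynomial.eval_map, hfB]
      rw [Polynomial.eval_prod]
      exact Finset.prod_eq_zero (Finset.mem_univ (Fin.last n)) (by simp)
    set ρ : A₁ →ₐ[A] B := AdjoinRoot.liftAlgHom f (Algebra.ofId A B) (ξ (Fin.last n))
      (by rw [← h0]; rfl) with hρ
    letI : Algebra A₁ B := ρ.toRingHom.toAlgebra
    haveI : IsScalarTower A A₁ B :=
      IsScalarTower.of_algebraMap_eq' (ρ.comp_algebraMap).symm
    have hrootρ : ρ (AdjoinRoot.root f) = ξ (Fin.last n) := by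
      rw [hρ]; exact AdjoinRoot.liftAlgHom_root _ _ _ _
    have hrB : algebraMap A₁ B r = ξ (Fin.last n) := hrootρ
    -- factorization of g over B
    have hBg : g.map (algebraMap A₁ B) =
        ∏ i : Fin n, (Polynomial.X - Polynomial.C (ξ i.castSucc)) := by
      have h1 : (Polynomial.X - Polynomial.C (ξ (Fin.last n))) * g.map (algebraMap A₁ B) =
          (Polynomial.X - Polynomial.C (ξ (Fin.last n))) *
            ∏ i : Fin n, (Polynomial.X - Polynomial.C (ξ i.castSucc)) := by
        calc (Polynomial.X - Polynomial.C (ξ (Fin.last n))) * g.map (algebraMap A₁ B)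
            = ((Polynomial.X - Polynomial.C r) * g).map (algebraMap A₁ B) := by
              rw [Polynomial.map_mul, Polynomial.map_sub, Polynomial.map_X,
                Polynomial.map_C, hrB]
          _ = f.map (algebraMap A B) := by
              rw [hfg, Polynomial.map_map, ← IsScalarTower.algebraMap_eq]
          _ = ∏ i : Fin (n + 1), (Polynomial.X - Polynomial.C (ξ i)) := hfB
          _ = (∏ i : Fin n, (Polynomial.X - Polynomial.C (ξ i.castSucc))) *
                (Polynomial.X - Polynomial.C (ξ (Fin.last n))) := Fin.prod_univ_castSucc _
          _ = _ := @mul_comm (B[X]) _ _ _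
      have h2 := congrArg (· /ₘ (Polynomial.X - Polynomial.C (ξ (Fin.last n)))) h1
      simpa only [Polynomial.mul_divByMonic_cancel_left _ (Polynomial.monic_X_sub_C _)]
        using h2
    -- C' and its generators
    set C' := SplitRing A₁ n g with hC'
    set ζ : Fin n → C' := fun i => Ideal.Quotient.mk _ (MvPolynomial.X i) with hζ
    have hgC' : g.map (algebraMap A₁ C') =
        ∏ i : Fin n, (Polynomial.X - Polynomial.C (ζ i)) := splitRing_factor hgm hgd
    set v : Fin (n + 1) → C' :=
      Fin.lastCases (algebraMap A₁ C' r) (fun i => ζ i) with hv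
    have hfC' : f.map (algebraMap A C') =
        ∏ i : Fin (n + 1), (Polynomial.X - Polynomial.C (v i)) := by
      rw [IsScalarTower.algebraMap_eq A A₁ C', ← Polynomial.map_map, ← hfg,
        Polynomial.map_mul, Polynomial.map_sub, Polynomial.map_X, Polynomial.map_C,
        hgC', Fin.prod_univ_castSucc]
      simp only [hv, Fin.lastCases_last, Fin.lastCases_castSucc]
      exact @mul_comm (C'[X]) _ _ _
    -- the two algebra maps
    set φ : B →ₐ[A] C' := splitLift hm hd v hfC' with hφ
    set ψ : C' →ₐ[A₁] B := splitLift hgm hgd (fun i => ξ i.castSucc) hBg with hψ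
    set ψA : C' →ₐ[A] B := ψ.restrictScalars A with hψA
    -- key: φ ∘ algebraMap A₁ = algebraMap A₁
    have key : ∀ a : A₁, φ (algebraMap A₁ B a) = algebraMap A₁ C' a := by
      have hext : φ.comp ρ = IsScalarTower.toAlgHom A A₁ C' := by
        apply AdjoinRoot.algHom_ext
        rw [AlgHom.comp_apply]
        show φ (ρ (AdjoinRoot.root f)) = algebraMap A₁ C' r
        rw [hrootρ]
        show splitLift hm hd v hfC' (Ideal.Quotient.mk _ (MvPolynomial.X (Fin.last n))) = _
        rw [splitLift_mk_X]
        simp only [hv, Fin.lastCases_last]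
      intro a
      exact DFunLike.congr_fun hext a
    have h₂ : ψA.comp φ = AlgHom.id A B := by
      apply Ideal.Quotient.algHom_ext
      apply MvPolynomial.algHom_ext
      intro i
      simp only [AlgHom.comp_apply, Ideal.Quotient.mkₐ_eq_mk, AlgHom.id_apply]
      rw [show (Ideal.Quotient.mk (splittingIdeal A (n+1) f)) (MvPolynomial.X i) = ξ i from rfl]
      rw [show φ (ξ i) = v i from splitLift_mk_X hm hd v hfC' i]
      induction i using Fin.lastCases with
      | last =>
        simp only [hv, Fin.lastCases_last]
        show ψ (algebraMap A₁ C' r) = ξ (Fin.last n)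
        rw [AlgHom.commutes, hrB]
      | cast j =>
        simp only [hv, Fin.lastCases_castSucc]
        exact splitLift_mk_X hgm hgd _ hBg j
    have h₁ : φ.comp ψA = AlgHom.id A C' := by
      have hring : ((φ.toRingHom.comp ψ.toRingHom).comp
            (Ideal.Quotient.mk (splittingIdeal A₁ n g)) :
            MvPolynomial (Fin n) A₁ →+* C') =
          Ideal.Quotient.mk (splittingIdeal A₁ n g) := by
        apply MvPolynomial.ringHom_ext
        · intro a
          simp only [RingHom.comp_apply, AlgHom.toRingHom_eq_coe, RingHom.coe_coe]
          rw [show (Ideal.Quotient.mk (splittingIdeal A₁ n g)) (MvPolynomial.C a) =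
            algebraMap A₁ C' a from rfl]
          rw [AlgHom.commutes]
          exact key a
        · intro i
          simp only [RingHom.comp_apply, AlgHom.toRingHom_eq_coe, RingHom.coe_coe]
          rw [show (Ideal.Quotient.mk (splittingIdeal A₁ n g)) (MvPolynomial.X i) = ζ i from rfl]
          rw [show ψ (ζ i) = ξ i.castSucc from splitLift_mk_X hgm hgd _ hBg i]
          rw [show φ (ξ i.castSucc) = v i.castSucc from splitLift_mk_X hm hd v hfC' i.castSucc]
          simp only [hv, Fin.lastCases_castSucc]
      apply AlgHom.ext
      intro x
      obtain ⟨y, rfl⟩ := Ideal.Quotient.mk_surjective x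
      exact DFunLike.congr_fun hring y
    let e : B ≃ₐ[A] C' := AlgEquiv.ofAlgHom φ ψA h₁ h₂
    obtain ⟨hFree₁, hFin₁⟩ := IH A₁ g hgm hgd
    have pb := AdjoinRoot.powerBasis' hm
    haveI : Module.Free A A₁ := Module.Free.of_basis pb.basis
    haveI : Module.Finite A A₁ := Module.Finite.of_basis pb.basis
    haveI hFreeC : Module.Free A C' := by
      let b1 := Module.Free.chooseBasis A A₁
      let b2 := Module.Free.chooseBasis A₁ C'
      exact Module.Free.of_basis (b1.smulTower b2)
    haveI hFinC : Module.Finite A C' := Module.Finite.trans A₁ C'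
    exact ⟨Module.Free.of_equiv e.symm.toLinearEquiv, Module.Finite.equiv e.symm.toLinearEquiv⟩

/-- For a noetherian commutative ring `A` and `f` monic of degree `n`, the splitting ring
`B = Split_A(f)` is syntomic over `A`: the map `A → B` is flat and of finite presentation,
and for every prime `p` of `A` the fiber ring `B ⊗_A κ(p) = Split_{κ(p)}(f)` is a
finite-dimensional complete intersection `κ(p)`-algebra (a quotient of a polynomial ring
in `d` variables by `d` elements). -/
theorem stmt17 (A : Type) [CommRing A] [IsNoetherianRing A] (n : ℕ) (f : Polynomial A)
    (hmonic : f.Monic) (hdeg : f.natDegree = n) :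
    Module.Flat A (SplitRing A n f) ∧
    Algebra.FinitePresentation A (SplitRing A n f) ∧
    ∀ (p : Ideal A) [p.IsPrime],
      FiniteDimensional (FractionRing (A ⧸ p))
        (SplitRing (FractionRing (A ⧸ p)) n
          (f.map ((algebraMap (A ⧸ p) (FractionRing (A ⧸ p))).comp
            (Ideal.Quotient.mk p)))) ∧
      ∃ (d : ℕ) (gs : Fin d → MvPolynomial (Fin d) (FractionRing (A ⧸ p))),
        Nonempty ((MvPolynomial (Fin d) (FractionRing (A ⧸ p)) ⧸
            Ideal.span (Set.range gs)) ≃ₐ[FractionRing (A ⧸ p)]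
          SplitRing (FractionRing (A ⧸ p)) n
            (f.map ((algebraMap (A ⧸ p) (FractionRing (A ⧸ p))).comp
              (Ideal.Quotient.mk p)))) := by
  obtain ⟨hfree, hfin⟩ := splitRing_free_finite n A f hmonic hdeg
  refine ⟨?_, ?_, ?_⟩
  · haveI := hfree
    exact Module.Flat.of_free
  · haveI : Algebra.FinitePresentation A (MvPolynomial (Fin n) A) :=
      inferInstance
    exact Algebra.FinitePresentation.quotient (Submodule.fg_span (Set.finite_range _))
  · intro p hp
    set κ := FractionRing (A ⧸ p) with hκ
    set f' := f.map ((algebraMap (A ⧸ p) κ).comp (Ideal.Quotient.mk p)) with hf'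
    have hm' : f'.Monic := hmonic.map _
    have hd' : f'.natDegree = n := by rw [hmonic.natDegree_map]; exact hdeg
    obtain ⟨hfree', hfin'⟩ := splitRing_free_finite n κ f' hm' hd'
    refine ⟨hfin', n, fun i : Fin n =>
      MvPolynomial.C (f'.coeff (n - ((i : ℕ) + 1))) -
        (-1 : MvPolynomial (Fin n) κ) ^ ((i : ℕ) + 1) *
          MvPolynomial.esymm (Fin n) κ ((i : ℕ) + 1), ⟨AlgEquiv.refl⟩⟩
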